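/- Let D ≥ 1, each 𝒳^d finite, 𝒳 = ∏_d 𝒳^d. Fix x_0 ∈ 𝒳 with factorized strictly positive forward marginal q(x | x_0) = ∏_d q^d(x^d | x_0^d). Let the forward rate be r(z | x) := Σ_d r^d(z^d | x^d) δ_{x^{∖d}, z^{∖d}} for z ≠ x, and let S(z | x) := (1 − δ_{z,x}) Σ_d S^d(z^d | x^d) δ_{z^{∖d}, x^{∖d}} with S^d > 0 and normalizer 𝒮(x) > 0, and M(z | x_0) as the normalization scalar Σ_d Σ_{w ≠ z^d} (q^d(w | x_0^d)/q^d(z^d | x_0^d)) S^d(z^d | w)/𝒮(w ∘ z^{∖d}). Then for any function G : 𝒳 × 𝒳 → ℝ, Σ_x q(x | x_0) Σ_{z ≠ x} r(z | x) G(x, z) = Σ_x q(x | x_0) Σ_z (S(z | x)/𝒮(x)) · (1/M(z | x_0)) · Σ_{d=1}^D (1/q^d(z^d | x_0^d)) Σ_{w ∈ 𝒳^d, w ≠ z^d} q^d(w | x_0^d) r^d(z^d | w) G(w ∘ z^{∖d}, z). -/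

import Mathlib

/-- Unnormalized single-coordinate-change proposal kernel
`S(z|x) = (1 − δ_{z,x}) Σ_d S^d(z^d|x^d) δ_{z^{∖d},x^{∖d}}`. -/
def Sker {D : ℕ} {X : Fin D → Type*} [∀ d, Fintype (X d)] [∀ d, DecidableEq (X d)]
    (Sd : ∀ d, X d → X d → ℝ) (z x : ∀ d, X d) : ℝ :=
  (if z = x then 0 else 1)
    * ∑ d, Sd d (z d) (x d) * (if ∀ e, e ≠ d → z e = x e then (1 : ℝ) else 0)

/-- Normalization scalar
`M(z|x_0) = Σ_d Σ_{w ≠ z^d} (q^d(w|x_0^d)/q^d(z^d|x_0^d)) S^d(z^d|w)/𝒮(w ∘ z^{∖d})`. -/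
noncomputable def Mnorm {D : ℕ} {X : Fin D → Type*}
    [∀ d, Fintype (X d)] [∀ d, DecidableEq (X d)]
    (qd : ∀ d, X d → ℝ) (Sd : ∀ d, X d → X d → ℝ) (z : ∀ d, X d) : ℝ :=
  ∑ d, ∑ w ∈ Finset.univ.erase (z d),
    (qd d w / qd d (z d)) * Sd d (z d) w
      / ∑ z', Sker Sd z' (Function.update z d w)

section aux
set_option linter.unusedSectionVars false
variable {D : ℕ} {X : Fin D → Type*} [∀ d, Fintype (X d)] [∀ d, DecidableEq (X d)]

lemma sum_update_eq (z : ∀ d, X d) (d : Fin D) (g : (∀ e, X e) → ℝ) :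
    ∑ x, (if ∀ e, e ≠ d → z e = x e then g x else 0) = ∑ w, g (Function.update z d w) := by
  classical
  rw [← Finset.sum_filter]
  have hupd : ∀ a ∈ Finset.univ.filter (fun a => ∀ e, e ≠ d → z e = a e),
      Function.update z d (a d) = a := by
    intro a ha
    simp only [Finset.mem_filter, Finset.mem_univ, true_and] at ha
    funext e
    by_cases he : e = d
    · subst he; simp
    · simp [Function.update_of_ne he, (ha e he).symm]
  refine Finset.sum_nbij' (fun x => x d) (fun w => Function.update z d w) ?_ ?_ ?_ ?_ ?_
  · intro a _; exact Finset.mem_univ _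
  · intro w hw
    simp only [Finset.mem_filter, Finset.mem_univ, true_and]
    intro e he
    simp [Function.update_of_ne he]
  · exact hupd
  · intro w hw; simp
  · intro a ha; rw [hupd a ha]

lemma prod_update_mul (qd : ∀ d, X d → ℝ) (z : ∀ d, X d) (d : Fin D) (w : X d) :
    (∏ e, qd e (Function.update z d w e)) * qd d (z d) = (∏ e, qd e (z e)) * qd d w := by
  classical
  have h : ∀ e, qd e (Function.update z d w e)
      = Function.update (fun e => qd e (z e)) d (qd d w) e :=
    fun e => Function.apply_update (fun k => qd k) z d w e
  simp_rw [h]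
  rw [Finset.prod_update_of_mem (Finset.mem_univ d)]
  rw [← Finset.mul_prod_erase Finset.univ (fun e => qd e (z e)) (Finset.mem_univ d),
    ← Finset.erase_eq]
  ring

lemma erase_sum_eq' {α : Type*} [Fintype α] [DecidableEq α] (v : α) (f : α → ℝ) :
    ∑ w ∈ Finset.univ.erase v, f w = ∑ w, if w = v then 0 else f w := by
  classical
  symm
  rw [← Finset.add_sum_erase Finset.univ (fun w => if w = v then (0:ℝ) else f w)
    (Finset.mem_univ v)]
  rw [if_pos rfl, zero_add]
  exact Finset.sum_congr rfl fun w hw => if_neg (Finset.ne_of_mem_erase hw)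

/-- involution pairing `x` and its `d`-th coordinate replacement. -/
def flipEquiv (d : Fin D) : ((∀ e, X e) × X d) ≃ ((∀ e, X e) × X d) where
  toFun p := (Function.update p.1 d p.2, p.1 d)
  invFun p := (Function.update p.1 d p.2, p.1 d)
  left_inv p := by simp [Function.update_idem, Function.update_eq_self]
  right_inv p := by simp [Function.update_idem, Function.update_eq_self]

end aux

/-- The importance-sampling exchange of the expectation variable behind
Proposition 5: the expectation, over `x ∼ q(·|x_0)`, of the forward-rate
weighted sum `Σ_{z≠x} r(z|x) G(x,z)` can be rewritten as an expectation over
the auxiliary variable `z ∼ S(·|x)/𝒮(x)` weighted by `1/M(z|x_0)`. -/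
theorem importance_sampling_exchange
    {D : ℕ} (hD : 1 ≤ D) {X : Fin D → Type*}
    [∀ d, Fintype (X d)] [∀ d, DecidableEq (X d)]
    (qd : ∀ d, X d → ℝ)  -- `qd d v = q^d(v | x_0^d)`
    (hqd_pos : ∀ d v, 0 < qd d v) (hqd_sum : ∀ d, ∑ v, qd d v = 1)
    (rd : ∀ d, X d → X d → ℝ)  -- `rd d a b = r^d(a | b)`
    (Sd : ∀ d, X d → X d → ℝ)  -- `Sd d b a = S^d(b | a)`
    (hSd_pos : ∀ d b a, 0 < Sd d b a)
    (hSnorm_pos : ∀ x : ∀ d, X d, 0 < ∑ z, Sker Sd z x)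
    (G : (∀ d, X d) → (∀ d, X d) → ℝ) :
    (∑ x, (∏ d, qd d (x d))
        * ∑ z ∈ Finset.univ.erase x,
            (∑ d, rd d (z d) (x d)
              * (if ∀ e, e ≠ d → x e = z e then (1 : ℝ) else 0)) * G x z)
      = ∑ x, (∏ d, qd d (x d))
          * ∑ z, (Sker Sd z x / ∑ z', Sker Sd z' x) * (1 / Mnorm qd Sd z)
              * ∑ d, (1 / qd d (z d))
                  * ∑ w ∈ Finset.univ.erase (z d),
                      qd d w * rd d (z d) w * G (Function.update z d w) z := by
  classical
  have hq_ne : ∀ d (v : X d), qd d v ≠ 0 := fun d v => (hqd_pos d v).ne'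
  have hS_ne : ∀ x : ∀ d, X d, (∑ z', Sker Sd z' x) ≠ 0 := fun x => (hSnorm_pos x).ne'
  set C : ℝ := ∑ d, ∑ z, ∑ w, (if w = z d then (0:ℝ) else
      (∏ e, qd e (Function.update z d w e)) * rd d (z d) w * G (Function.update z d w) z)
    with hC
  have key_flip : ∀ (d : Fin D) (F : (∀ e, X e) → X d → ℝ),
      (∑ x, ∑ v, F x v) = ∑ z, ∑ w, F (Function.update z d w) (z d) := by
    intro d F
    calc ∑ x, ∑ v, F x v
        = ∑ p : (∀ e, X e) × X d, F p.1 p.2 := by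
          exact (Fintype.sum_prod_type (f := fun p : (∀ e, X e) × X d => F p.1 p.2)).symm
      _ = ∑ p : (∀ e, X e) × X d,
            F (Function.update p.1 d p.2) (p.1 d) := by
          exact (Equiv.sum_comp (flipEquiv d) (fun p => F p.1 p.2)).symm
      _ = ∑ z, ∑ w, F (Function.update z d w) (z d) := by
          exact Fintype.sum_prod_type
            (f := fun p : (∀ e, X e) × X d => F (Function.update p.1 d p.2) (p.1 d))
  -- LHS = C
  have hLHS : (∑ x, (∏ d, qd d (x d))
        * ∑ z ∈ Finset.univ.erase x,
            (∑ d, rd d (z d) (x d)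
              * (if ∀ e, e ≠ d → x e = z e then (1 : ℝ) else 0)) * G x z) = C := by
    have step1 : ∀ x : ∀ d, X d, (∏ d, qd d (x d))
        * ∑ z ∈ Finset.univ.erase x,
            (∑ d, rd d (z d) (x d)
              * (if ∀ e, e ≠ d → x e = z e then (1 : ℝ) else 0)) * G x z
        = ∑ d, ∑ v, (if v = x d then (0:ℝ) else
            (∏ e, qd e (x e)) * rd d v (x d) * G x (Function.update x d v)) := by
      intro x
      rw [erase_sum_eq' x, Finset.mul_sum]
      have inner : ∀ z : ∀ d, X d,
          (∏ d, qd d (x d)) * (if z = x then 0 else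
            (∑ d, rd d (z d) (x d)
              * (if ∀ e, e ≠ d → x e = z e then (1 : ℝ) else 0)) * G x z)
          = ∑ d, (if ∀ e, e ≠ d → x e = z e then
              (if z = x then (0:ℝ) else (∏ e, qd e (x e)) * rd d (z d) (x d) * G x z) else 0) := by
        intro z
        by_cases hz : z = x
        · simp [hz]
        · rw [if_neg hz, Finset.sum_mul, Finset.mul_sum]
          refine Finset.sum_congr rfl fun d _ => ?_
          by_cases hc : ∀ e, e ≠ d → x e = z e
          · rw [if_pos hc, if_pos hc, if_neg hz]; ring
          · rw [if_neg hc, if_neg hc]; ring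
      simp_rw [inner]
      rw [Finset.sum_comm]
      refine Finset.sum_congr rfl fun d _ => ?_
      rw [sum_update_eq x d (fun z => if z = x then (0:ℝ)
        else (∏ e, qd e (x e)) * rd d (z d) (x d) * G x z)]
      refine Finset.sum_congr rfl fun v _ => ?_
      rw [Function.update_self]
      by_cases hv : v = x d
      · rw [if_pos hv, if_pos (by rw [hv, Function.update_eq_self])]
      · rw [if_neg hv, if_neg (fun h => hv (by
          have := congrFun h d; rwa [Function.update_self] at this))]
    calc (∑ x, (∏ d, qd d (x d))
        * ∑ z ∈ Finset.univ.erase x,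
            (∑ d, rd d (z d) (x d)
              * (if ∀ e, e ≠ d → x e = z e then (1 : ℝ) else 0)) * G x z)
        = ∑ x, ∑ d, ∑ v, (if v = x d then (0:ℝ) else
            (∏ e, qd e (x e)) * rd d v (x d) * G x (Function.update x d v)) :=
          Finset.sum_congr rfl fun x _ => step1 x
      _ = ∑ d, ∑ x, ∑ v, (if v = x d then (0:ℝ) else
            (∏ e, qd e (x e)) * rd d v (x d) * G x (Function.update x d v)) :=
          Finset.sum_comm
      _ = C := by
          rw [hC]
          refine Finset.sum_congr rfl fun d _ => ?_
          rw [key_flip d (fun x v => (if v = x d then (0:ℝ) else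
            (∏ e, qd e (x e)) * rd d v (x d) * G x (Function.update x d v)))]
          refine Finset.sum_congr rfl fun z _ => Finset.sum_congr rfl fun w _ => ?_
          rw [Function.update_self, Function.update_idem, Function.update_eq_self]
          by_cases hw : w = z d
          · rw [if_pos hw.symm, if_pos hw]
          · rw [if_neg (fun h => hw h.symm), if_neg hw]
  -- marginalization: ∑_x q(x) S(z|x)/𝒮(x) = (∏ q(z)) · M(z)
  have hmarg : ∀ z : ∀ d, X d,
      (∑ x, (∏ e, qd e (x e)) * (Sker Sd z x / ∑ z', Sker Sd z' x))
        = (∏ e, qd e (z e)) * Mnorm qd Sd z := by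
    intro z
    have expand : ∀ x : ∀ d, X d,
        (∏ e, qd e (x e)) * (Sker Sd z x / ∑ z', Sker Sd z' x)
        = ∑ d, (if ∀ e, e ≠ d → z e = x e then
            (if z = x then (0:ℝ) else
              (∏ e, qd e (x e)) * Sd d (z d) (x d) / ∑ z', Sker Sd z' x) else 0) := by
      intro x
      unfold Sker
      by_cases hz : z = x
      · simp [hz]
      · rw [if_neg hz, one_mul, Finset.sum_div, Finset.mul_sum]
        refine Finset.sum_congr rfl fun d _ => ?_
        by_cases hc : ∀ e, e ≠ d → z e = x e
        · rw [if_pos hc, if_pos hc, if_neg hz]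
          rw [mul_one, mul_div_assoc]
        · rw [if_neg hc, if_neg hc, mul_zero, zero_div, mul_zero]
    simp_rw [expand]
    rw [Finset.sum_comm]
    unfold Mnorm
    rw [Finset.mul_sum]
    refine Finset.sum_congr rfl fun d _ => ?_
    rw [sum_update_eq z d (fun x => if z = x then (0:ℝ)
      else (∏ e, qd e (x e)) * Sd d (z d) (x d) / ∑ z', Sker Sd z' x)]
    rw [Finset.mul_sum, erase_sum_eq' (z d) (fun w => (∏ e, qd e (z e)) *
      ((qd d w / qd d (z d)) * Sd d (z d) w / ∑ z', Sker Sd z' (Function.update z d w)))]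
    refine Finset.sum_congr rfl fun w _ => ?_
    by_cases hw : w = z d
    · rw [if_pos hw, if_pos (by rw [hw]; exact (Function.update_eq_self d z).symm)]
    · rw [if_neg hw, if_neg (fun h => hw (by
        have := congrFun h d; rw [Function.update_self] at this; exact this.symm))]
      rw [Function.update_self]
      have hpu := prod_update_mul qd z d w
      have hqz := hq_ne d (z d)
      have hP : (∏ e, qd e (z e)) * (qd d w / qd d (z d))
          = ∏ e, qd e (Function.update z d w e) := by
        rw [← mul_div_assoc, div_eq_iff hqz]
        exact hpu.symm
      rw [← hP]; ring
  -- M(z) = 0 forces the inner index sets to be empty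
  have hMcase : ∀ z : ∀ d, X d, Mnorm qd Sd z = 0 →
      ∀ d : Fin D, Finset.univ.erase (z d) = ∅ := by
    intro z hM d
    by_contra hne
    have hpos : 0 < Mnorm qd Sd z := by
      unfold Mnorm
      refine Finset.sum_pos' (fun i _ => Finset.sum_nonneg fun w _ => le_of_lt ?_)
        ⟨d, Finset.mem_univ d, Finset.sum_pos (fun w _ => ?_)
          (Finset.nonempty_of_ne_empty hne)⟩
      · exact div_pos (mul_pos (div_pos (hqd_pos _ _) (hqd_pos _ _)) (hSd_pos _ _ _))
          (hSnorm_pos _)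
      · exact div_pos (mul_pos (div_pos (hqd_pos _ _) (hqd_pos _ _)) (hSd_pos _ _ _))
          (hSnorm_pos _)
    exact hpos.ne' hM
  -- RHS = C
  have hRHS : (∑ x, (∏ d, qd d (x d))
          * ∑ z, (Sker Sd z x / ∑ z', Sker Sd z' x) * (1 / Mnorm qd Sd z)
              * ∑ d, (1 / qd d (z d))
                  * ∑ w ∈ Finset.univ.erase (z d),
                      qd d w * rd d (z d) w * G (Function.update z d w) z) = C := by
    rw [show (∑ x, (∏ d, qd d (x d))
          * ∑ z, (Sker Sd z x / ∑ z', Sker Sd z' x) * (1 / Mnorm qd Sd z)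
              * ∑ d, (1 / qd d (z d))
                  * ∑ w ∈ Finset.univ.erase (z d),
                      qd d w * rd d (z d) w * G (Function.update z d w) z)
        = ∑ x, ∑ z, (∏ d, qd d (x d))
          * ((Sker Sd z x / ∑ z', Sker Sd z' x) * (1 / Mnorm qd Sd z)
              * ∑ d, (1 / qd d (z d))
                  * ∑ w ∈ Finset.univ.erase (z d),
                      qd d w * rd d (z d) w * G (Function.update z d w) z) from
      Finset.sum_congr rfl fun x _ => Finset.mul_sum _ _ _, Finset.sum_comm]
    have step : ∀ z : ∀ d, X d,
        (∑ x, (∏ d, qd d (x d)) * ((Sker Sd z x / ∑ z', Sker Sd z' x) * (1 / Mnorm qd Sd z)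
              * ∑ d, (1 / qd d (z d))
                  * ∑ w ∈ Finset.univ.erase (z d),
                      qd d w * rd d (z d) w * G (Function.update z d w) z))
        = ∑ d, ∑ w, (if w = z d then (0:ℝ) else
            (∏ e, qd e (Function.update z d w e)) * rd d (z d) w
              * G (Function.update z d w) z) := by
      intro z
      set T := ∑ d, (1 / qd d (z d))
          * ∑ w ∈ Finset.univ.erase (z d),
              qd d w * rd d (z d) w * G (Function.update z d w) z with hT
      have pull : (∑ x, (∏ d, qd d (x d)) * ((Sker Sd z x / ∑ z', Sker Sd z' x)
            * (1 / Mnorm qd Sd z) * T))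
          = ((∏ e, qd e (z e)) * Mnorm qd Sd z) * ((1 / Mnorm qd Sd z) * T) := by
        rw [← hmarg z, Finset.sum_mul]
        exact Finset.sum_congr rfl fun x _ => by ring
      rw [pull]
      by_cases hM : Mnorm qd Sd z = 0
      · have hempty := hMcase z hM
        have hall : ∀ (d : Fin D) (w : X d), w = z d := by
          intro d w
          by_contra hne
          have hmem : w ∈ Finset.univ.erase (z d) :=
            Finset.mem_erase.mpr ⟨hne, Finset.mem_univ w⟩
          rw [hempty d] at hmem
          exact absurd hmem (Finset.notMem_empty w)
        rw [hM, mul_zero, zero_mul]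
        symm
        exact Finset.sum_eq_zero fun d _ => Finset.sum_eq_zero fun w _ =>
          if_pos (hall d w)
      · have h1 : ((∏ e, qd e (z e)) * Mnorm qd Sd z) * ((1 / Mnorm qd Sd z) * T)
            = (∏ e, qd e (z e)) * T := by
          rw [one_div, show ((∏ e, qd e (z e)) * Mnorm qd Sd z)
              * ((Mnorm qd Sd z)⁻¹ * T)
            = (∏ e, qd e (z e)) * (Mnorm qd Sd z * (Mnorm qd Sd z)⁻¹) * T from by ring,
            mul_inv_cancel₀ hM, mul_one]
        rw [h1, hT, Finset.mul_sum]
        refine Finset.sum_congr rfl fun d _ => ?_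
        rw [Finset.mul_sum, Finset.mul_sum,
          show (∑ w, (if w = z d then (0:ℝ) else
            (∏ e, qd e (Function.update z d w e)) * rd d (z d) w
              * G (Function.update z d w) z))
          = ∑ w ∈ Finset.univ.erase (z d),
              (∏ e, qd e (Function.update z d w e)) * rd d (z d) w
                * G (Function.update z d w) z from
            (erase_sum_eq' (z d) _).symm]
        refine Finset.sum_congr rfl fun w hw => ?_
        have hpu := prod_update_mul qd z d w
        have hqz := hq_ne d (z d)
        have hP : (∏ e, qd e (z e)) * (qd d w / qd d (z d))
            = ∏ e, qd e (Function.update z d w e) := by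
          rw [← mul_div_assoc, div_eq_iff hqz]
          exact hpu.symm
        rw [← hP]; ring
    calc (∑ z, ∑ x, (∏ d, qd d (x d))
          * ((Sker Sd z x / ∑ z', Sker Sd z' x) * (1 / Mnorm qd Sd z)
              * ∑ d, (1 / qd d (z d))
                  * ∑ w ∈ Finset.univ.erase (z d),
                      qd d w * rd d (z d) w * G (Function.update z d w) z))
        = ∑ z, ∑ d, ∑ w, (if w = z d then (0:ℝ) else
            (∏ e, qd e (Function.update z d w e)) * rd d (z d) w
              * G (Function.update z d w) z) :=
          Finset.sum_congr rfl fun z _ => step z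
      _ = C := by rw [hC]; exact Finset.sum_comm
  rw [hLHS, hRHS]
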